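/- Algorithm 2 solves SUIR in FSYNC with rigid movements and common coordinate system: for any initial positions a < b on the line and any crash pattern (left crashed, right crashed, or no crash), the robots reach a common point in finitely many rounds and stay there. -/
import Mathlib

/-- Destination computed by Algorithm 2 for a robot at `x` seeing the other at `y`
(common coordinate system, unit distance 1): if the distance exceeds 1, go to the
midpoint; otherwise the right robot goes to the other's position and the left robot
goes to the point at distance 1 to the right of the other; if gathered, stay. -/
noncomputable def dest2 (x y : ℝ) : ℝ :=
  if 1 < |y - x| then (x + y) / 2
  else if x < y then y + 1
  else if y < x then y
  else x

lemma dest2_self (x : ℝ) : dest2 x x = x := by simp [dest2]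

lemma dest2_far (x y : ℝ) (h : 1 < |y - x|) : dest2 x y = (x + y) / 2 := by
  rw [dest2, if_pos h]

lemma dest2_near_lt (x y : ℝ) (h1 : ¬ 1 < |y - x|) (h2 : x < y) : dest2 x y = y + 1 := by
  rw [dest2, if_neg h1, if_pos h2]

lemma dest2_near_gt (x y : ℝ) (h1 : ¬ 1 < |y - x|) (h2 : y < x) : dest2 x y = y := by
  rw [dest2, if_neg h1, if_neg (not_lt.mpr h2.le), if_pos h2]

lemma single (s : ℝ) (r : ℕ → ℝ) (hr : ∀ n, r (n + 1) = dest2 (r n) s) :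
    ∃ N, ∀ n, N ≤ n → r n = s := by
  have key : ∀ n, (∃ m, |s - r m| ≤ 1) ∨ |s - r n| = |s - r 0| / 2 ^ n := by
    intro n
    induction n with
    | zero => right; simp
    | succ n ih =>
      rcases ih with h | h
      · exact Or.inl h
      · by_cases hle : |s - r n| ≤ 1
        · exact Or.inl ⟨n, hle⟩
        · right
          have hgt : 1 < |s - r n| := lt_of_not_ge hle
          rw [hr n, dest2_far _ _ hgt]
          have h1 : s - (r n + s) / 2 = (s - r n) / 2 := by ring
          rw [h1, abs_div, abs_two, h]
          rw [pow_succ]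
          ring
  obtain ⟨n, hn⟩ := pow_unbounded_of_one_lt (|s - r 0|) (by norm_num : (1:ℝ) < 2)
  have hm : ∃ m, |s - r m| ≤ 1 := by
    rcases key n with h | h
    · exact h
    · refine ⟨n, ?_⟩
      rw [h]
      rw [div_le_one (by positivity)]
      exact hn.le
  obtain ⟨m, hm⟩ := hm
  have hnl : ¬ 1 < |s - r m| := not_lt.mpr hm
  have h2 : r (m + 2) = s := by
    rcases lt_trichotomy (r m) s with h | h | h
    · have e1 : r (m + 1) = s + 1 := by rw [hr m, dest2_near_lt _ _ hnl h]
      have : r (m + 2) = dest2 (s + 1) s := by rw [hr (m + 1), e1]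
      rw [this, dest2_near_gt]
      · rw [show s - (s + 1) = -1 by ring, abs_neg, abs_one]; norm_num
      · linarith
    · have e1 : r (m + 1) = s := by rw [hr m, h, dest2_self]
      rw [hr (m + 1), e1, dest2_self]
    · have e1 : r (m + 1) = s := by rw [hr m, dest2_near_gt _ _ hnl h]
      rw [hr (m + 1), e1, dest2_self]
  have stay : ∀ k, r (m + 2 + k) = s := by
    intro k
    induction k with
    | zero => exact h2
    | succ k ih => rw [show m + 2 + (k + 1) = (m + 2 + k) + 1 from rfl, hr, ih, dest2_self]
  refine ⟨m + 2, fun n hn' => ?_⟩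
  obtain ⟨k, rfl⟩ := Nat.exists_eq_add_of_le hn'
  exact stay k

/-- Algorithm 2 solves SUIR in FSYNC with rigid movements and a common coordinate
system: for any initial positions `a < b` and any crash pattern (left crashed,
right crashed, or no crash), the robots reach a common point in finitely many
rounds and stay there. -/
theorem algo2_solves_SUIR (a b : ℝ) (hab : a < b)
    (activeL activeR : Bool) (hactive : activeL = true ∨ activeR = true)
    (p q : ℕ → ℝ) (hp0 : p 0 = a) (hq0 : q 0 = b)
    (hp : ∀ n, p (n + 1) = if activeL then dest2 (p n) (q n) else p n)
    (hq : ∀ n, q (n + 1) = if activeR then dest2 (q n) (p n) else q n) :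
    ∃ (N : ℕ) (c : ℝ), ∀ n, N ≤ n → p n = c ∧ q n = c := by
  cases activeL with
  | false =>
    cases activeR with
    | false => simp at hactive
    | true =>
      -- left crashed
      simp only [if_true, if_false, Bool.false_eq_true] at hp hq
      have hpc : ∀ n, p n = a := by
        intro n; induction n with
        | zero => exact hp0
        | succ n ih => rw [hp, ih]
      have hq' : ∀ n, q (n + 1) = dest2 (q n) a := by
        intro n; rw [hq, hpc]
      obtain ⟨N, hN⟩ := single a q hq'
      exact ⟨N, a, fun n hn => ⟨hpc n, hN n hn⟩⟩
  | true =>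
    cases activeR with
    | false =>
      -- right crashed
      simp only [if_true, if_false, Bool.false_eq_true] at hp hq
      have hqc : ∀ n, q n = b := by
        intro n; induction n with
        | zero => exact hq0
        | succ n ih => rw [hq, ih]
      have hp' : ∀ n, p (n + 1) = dest2 (p n) b := by
        intro n; rw [hp, hqc]
      obtain ⟨N, hN⟩ := single b p hp'
      exact ⟨N, b, fun n hn => ⟨hN n hn, hqc n⟩⟩
    | true =>
      -- both active
      simp only [if_true] at hp hq
      have stay : ∀ (N : ℕ) (c : ℝ), p N = c → q N = c → ∀ n, N ≤ n → p n = c ∧ q n = c := by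
        intro N c hpN hqN n hn
        obtain ⟨k, rfl⟩ := Nat.exists_eq_add_of_le hn
        induction k with
        | zero => exact ⟨hpN, hqN⟩
        | succ k ih =>
          obtain ⟨ih1, ih2⟩ := ih (Nat.le_add_right _ _)
          constructor
          · rw [show N + (k + 1) = (N + k) + 1 from rfl, hp, ih1, ih2, dest2_self]
          · rw [show N + (k + 1) = (N + k) + 1 from rfl, hq, ih1, ih2, dest2_self]
      by_cases hd : 1 < b - a
      · have habs : 1 < |b - a| := by rw [abs_of_pos (by linarith)]; exact hd
        have habs' : 1 < |a - b| := by rw [abs_sub_comm]; exact habs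
        have hp1 : p 1 = (a + b) / 2 := by
          rw [hp 0, hp0, hq0, dest2_far _ _ habs]
        have hq1 : q 1 = (a + b) / 2 := by
          rw [hq 0, hp0, hq0, dest2_far _ _ habs', add_comm]
        exact ⟨1, (a + b) / 2, stay 1 _ hp1 hq1⟩
      · have h1 : ¬ 1 < |b - a| := by rw [abs_of_pos (by linarith)]; exact hd
        have h1' : ¬ 1 < |a - b| := by rwa [abs_sub_comm]
        have hp1 : p 1 = b + 1 := by rw [hp 0, hp0, hq0, dest2_near_lt _ _ h1 hab]
        have hq1 : q 1 = a := by rw [hq 0, hp0, hq0, dest2_near_gt _ _ h1' hab]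
        have hfar : 1 < |a - (b + 1)| := by
          rw [abs_of_neg (by linarith)]; linarith
        have hfar' : 1 < |(b + 1) - a| := by rw [abs_sub_comm]; exact hfar
        have hp2 : p 2 = (a + b + 1) / 2 := by
          rw [hp 1, hp1, hq1, dest2_far _ _ hfar]; ring
        have hq2 : q 2 = (a + b + 1) / 2 := by
          rw [hq 1, hp1, hq1, dest2_far _ _ hfar']; ring
        exact ⟨2, (a + b + 1) / 2, stay 2 _ hp2 hq2⟩
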